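/- (Euclidean C⁰ maximum-principle estimate for the modified Jang equation.) Let n be a positive integer, let Ω ⊂ ℝⁿ (Euclidean n-space) be a nonempty bounded open set, let τ > 0, let λ be a real number with |λ| ≤ 1, let β ≥ 0, let ζ be a continuous function on the closure of Ω with values in [0,1], and let q assign continuously to each point of the closure of Ω a symmetric n×n real matrix. Let w be continuous on the closure of Ω and twice continuously differentiable on Ω, and suppose that at every point of Ω one has Σ_{i,j} (δ_{ij} − (1 + ‖∇w‖²)^{−1} ∂_i w ∂_j w)·((1 + ‖∇w‖²)^{−1/2} ∂_i ∂_j w − λ·q_{ij}) = τ²·ζ²·w, that w = 0 at every point of the boundary ∂Ω, and that |w(x)| ≤ β at every point x ∈ Ω where ζ(x) < 1. Then sup over the closure of Ω of |w| is at most max{β, τ^{−2}·sup over the closure of Ω of n·‖q‖}, where ‖q‖ denotes the pointwise Frobenius norm of q. -/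

import Mathlib

open Filter Topology

/-- The partial derivative of `f : ℝⁿ → ℝ` in the `i`-th coordinate direction. -/
noncomputable def pder {n : ℕ} (f : EuclideanSpace ℝ (Fin n) → ℝ) (i : Fin n)
    (x : EuclideanSpace ℝ (Fin n)) : ℝ :=
  fderiv ℝ f x (EuclideanSpace.single i 1)

lemma second_deriv_test {g g' : ℝ → ℝ} {c : ℝ}
    (hmax : IsLocalMax g 0)
    (hg : ∀ᶠ t in 𝓝 (0:ℝ), HasDerivAt g (g' t) t)
    (hg' : HasDerivAt g' c 0) : c ≤ 0 := by
  by_contra hc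
  push_neg at hc
  have h0 : g' 0 = 0 := by
    have h1 := hg.self_of_nhds
    rw [← h1.deriv]; exact hmax.deriv_eq_zero
  have hslope := hasDerivAt_iff_tendsto_slope.1 hg'
  have hpos : ∀ᶠ t in 𝓝[≠] (0:ℝ), 0 < slope g' 0 t :=
    hslope.eventually (eventually_gt_nhds hc)
  obtain ⟨ε₁, hε₁, H₁⟩ := Metric.eventually_nhds_iff_ball.1 hg
  obtain ⟨ε₂, hε₂, H₂⟩ := Metric.eventually_nhds_iff_ball.1 hmax
  obtain ⟨ε₃, hε₃, H₃⟩ := Metric.eventually_nhds_iff_ball.1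
    (eventually_nhdsWithin_iff.1 hpos)
  set ε := min ε₁ (min ε₂ ε₃) with hε
  have hεpos : 0 < ε := by positivity
  set r := ε / 2 with hr
  have hrpos : 0 < r := by positivity
  have hb1 : Metric.ball (0:ℝ) ε ⊆ Metric.ball 0 ε₁ :=
    Metric.ball_subset_ball (min_le_left _ _)
  have hb3 : Metric.ball (0:ℝ) ε ⊆ Metric.ball 0 ε₃ :=
    Metric.ball_subset_ball (le_trans (min_le_right _ _) (min_le_right _ _))
  have hmem : ∀ t ∈ Set.Icc (0:ℝ) r, t ∈ Metric.ball (0:ℝ) ε := by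
    intro t ht
    rw [Metric.mem_ball, Real.dist_eq, sub_zero, abs_of_nonneg ht.1]
    linarith [ht.2]
  have hcont : ContinuousOn g (Set.Icc (0:ℝ) r) := fun t ht =>
    (H₁ t (hb1 (hmem t ht))).continuousAt.continuousWithinAt
  have hderiv : ∀ t ∈ interior (Set.Icc (0:ℝ) r), 0 < deriv g t := by
    intro t ht
    rw [interior_Icc] at ht
    have htb : t ∈ Metric.ball (0:ℝ) ε := hmem t ⟨le_of_lt ht.1, le_of_lt ht.2⟩
    have hsl : 0 < slope g' 0 t := H₃ t (hb3 htb) (ne_of_gt ht.1)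
    rw [slope_def_field, div_eq_mul_inv, h0, sub_zero, sub_zero] at hsl
    have hgt : 0 < g' t := by
      by_contra h; push_neg at h
      nlinarith [inv_pos.2 ht.1]
    rw [(H₁ t (hb1 htb)).deriv]; exact hgt
  have hmono := strictMonoOn_of_deriv_pos (convex_Icc 0 r) hcont hderiv
  have h1 : g 0 < g r := hmono (Set.left_mem_Icc.2 hrpos.le)
    (Set.right_mem_Icc.2 hrpos.le) hrpos
  have h2 : g r ≤ g 0 := H₂ r (by
    rw [Metric.mem_ball, Real.dist_eq, sub_zero, abs_of_nonneg hrpos.le]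
    have : ε ≤ ε₂ := le_trans (min_le_right _ _) (min_le_left _ _)
    linarith)
  linarith

lemma line_hasDerivAt {n : ℕ} (f : EuclideanSpace ℝ (Fin n) → ℝ)
    (x e : EuclideanSpace ℝ (Fin n)) (t : ℝ) (hf : DifferentiableAt ℝ f (x + t • e)) :
    HasDerivAt (fun s => f (x + s • e)) (fderiv ℝ f (x + t • e) e) t := by
  have hL : HasDerivAt (fun s : ℝ => x + s • e) e t := by
    simpa using ((hasDerivAt_id t).smul_const e).const_add x
  exact hf.hasFDerivAt.comp_hasDerivAt t hL

lemma pder_diffOn {n : ℕ} {w : EuclideanSpace ℝ (Fin n) → ℝ}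
    {Ω : Set (EuclideanSpace ℝ (Fin n))} (hopen : IsOpen Ω)
    (hw2 : ContDiffOn ℝ 2 w Ω) (i : Fin n) :
    DifferentiableOn ℝ (pder w i) Ω := by
  have h : ContDiffOn ℝ 1 (fderiv ℝ w) Ω :=
    hw2.fderiv_of_isOpen hopen (by norm_num)
  exact (h.differentiableOn (by norm_num)).clm_apply (differentiableOn_const _)

lemma interior_max_bounds {n : ℕ} {Ω : Set (EuclideanSpace ℝ (Fin n))}
    (hopen : IsOpen Ω) {w : EuclideanSpace ℝ (Fin n) → ℝ}
    (hw2 : ContDiffOn ℝ 2 w Ω) {x₀ : EuclideanSpace ℝ (Fin n)} (hx₀ : x₀ ∈ Ω)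
    {s : ℝ} (hs : s = 1 ∨ s = -1)
    (hmax : ∀ y ∈ Ω, s * w y ≤ s * w x₀) :
    (∀ k, pder w k x₀ = 0) ∧ ∀ i, s * pder (pder w i) i x₀ ≤ 0 := by
  have hdw : DifferentiableOn ℝ w Ω := hw2.differentiableOn (by norm_num)
  have hwx : DifferentiableAt ℝ w x₀ := (hdw x₀ hx₀).differentiableAt (hopen.mem_nhds hx₀)
  have hsne : s ≠ 0 := by rcases hs with h | h <;> rw [h] <;> norm_num
  have hlm : IsLocalMax (fun x => s * w x) x₀ :=
    Filter.eventually_of_mem (hopen.mem_nhds hx₀) (fun y hy => hmax y hy)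
  have hgrad : fderiv ℝ w x₀ = 0 := by
    have h1 := hlm.fderiv_eq_zero
    rw [fderiv_const_mul hwx s] at h1
    have := smul_eq_zero.1 h1
    tauto
  constructor
  · intro k; simp [pder, hgrad]
  · intro i
    set e := EuclideanSpace.single i (1 : ℝ) with he
    have hev : ∀ᶠ t in 𝓝 (0:ℝ), x₀ + t • e ∈ Ω := by
      have hc : Continuous (fun t : ℝ => x₀ + t • e) := by continuity
      have h2 := hc.continuousAt (x := 0)
      apply h2.eventually_mem
      simpa using hopen.mem_nhds hx₀
    have hg : ∀ᶠ t in 𝓝 (0:ℝ),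
        HasDerivAt (fun t => s * w (x₀ + t • e)) (s * pder w i (x₀ + t • e)) t := by
      filter_upwards [hev] with t ht
      have hdiff : DifferentiableAt ℝ w (x₀ + t • e) :=
        (hdw _ ht).differentiableAt (hopen.mem_nhds ht)
      exact (line_hasDerivAt w x₀ e t hdiff).const_mul s
    have hg' : HasDerivAt (fun t : ℝ => s * pder w i (x₀ + t • e))
        (s * pder (pder w i) i x₀) (0:ℝ) := by
      have hdiff : DifferentiableAt ℝ (pder w i) (x₀ + (0:ℝ) • e) := by
        simpa using (pder_diffOn hopen hw2 i x₀ hx₀).differentiableAt (hopen.mem_nhds hx₀)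
      have h3 := (line_hasDerivAt (pder w i) x₀ e 0 hdiff).const_mul s
      simpa [pder] using h3
    have hmaxg : IsLocalMax (fun t : ℝ => s * w (x₀ + t • e)) (0:ℝ) := by
      filter_upwards [hev] with t ht
      simpa using hmax _ ht
    exact second_deriv_test hmaxg hg hg'

/-- Euclidean C⁰ maximum-principle estimate for the modified Jang
equation, cf. Lemma `C0.estimate.version.3`: if `w` solves
`∑_{i,j} (δ_{ij} - (1+‖∇w‖²)⁻¹ ∂_i w ∂_j w)((1+‖∇w‖²)^{-1/2} ∂_i∂_j w - λ q_{ij})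
 = τ² ζ² w`
on a nonempty bounded open `Ω ⊂ ℝⁿ`, with `w = 0` on `∂Ω`, and `|w| ≤ β` wherever
`ζ < 1` in `Ω`, then `sup_{closure Ω} |w| ≤ max {β, τ⁻² · sup_{closure Ω} n‖q‖_F}`. -/
theorem c0_maximum_principle (n : ℕ) (hn : 0 < n)
    (Ω : Set (EuclideanSpace ℝ (Fin n))) (hne : Ω.Nonempty)
    (hopen : IsOpen Ω) (hbdd : Bornology.IsBounded Ω)
    (τ : ℝ) (hτ : 0 < τ) (lam : ℝ) (hlam : |lam| ≤ 1) (β : ℝ) (hβ : 0 ≤ β)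
    (ζ : EuclideanSpace ℝ (Fin n) → ℝ)
    (hζc : ContinuousOn ζ (closure Ω))
    (hζ01 : ∀ x ∈ closure Ω, ζ x ∈ Set.Icc (0 : ℝ) 1)
    (q : EuclideanSpace ℝ (Fin n) → Matrix (Fin n) (Fin n) ℝ)
    (hqc : ∀ i j, ContinuousOn (fun x => q x i j) (closure Ω))
    (hqs : ∀ x ∈ closure Ω, (q x).IsSymm)
    (w : EuclideanSpace ℝ (Fin n) → ℝ)
    (hwc : ContinuousOn w (closure Ω)) (hw2 : ContDiffOn ℝ 2 w Ω)
    (hpde : ∀ x ∈ Ω,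
      ∑ i, ∑ j,
          ((if i = j then (1 : ℝ) else 0)
              - (1 + ∑ k, (pder w k x) ^ 2)⁻¹ * pder w i x * pder w j x)
            * ((1 + ∑ k, (pder w k x) ^ 2) ^ (-(1 / 2) : ℝ) * pder (pder w j) i x
                - lam * q x i j)
        = τ ^ 2 * ζ x ^ 2 * w x)
    (hbc : ∀ x ∈ frontier Ω, w x = 0)
    (hsmall : ∀ x ∈ Ω, ζ x < 1 → |w x| ≤ β) :
    ∀ x ∈ closure Ω,
      |w x| ≤ max β ((τ ^ 2)⁻¹ *
        sSup ((fun x => (n : ℝ) * Real.sqrt (∑ i, ∑ j, (q x i j) ^ 2)) '' closure Ω)) := by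
  have hK : IsCompact (closure Ω) :=
    Metric.isCompact_of_isClosed_isBounded isClosed_closure hbdd.closure
  obtain ⟨x₀, hx₀K, hmax⟩ := hK.exists_isMaxOn hne.closure hwc.abs
  have hmax' : ∀ y ∈ closure Ω, |w y| ≤ |w x₀| := hmax
  suffices h : |w x₀| ≤ max β ((τ ^ 2)⁻¹ *
      sSup ((fun x => (n : ℝ) * Real.sqrt (∑ i, ∑ j, (q x i j) ^ 2)) '' closure Ω)) by
    intro x hx; exact le_trans (hmax' x hx) h
  by_cases hw0 : w x₀ = 0
  · rw [hw0, abs_zero]; exact le_max_of_le_left hβ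
  have hx₀Ω : x₀ ∈ Ω := by
    by_contra h
    exact hw0 (hbc x₀ ⟨hx₀K, by rwa [hopen.interior_eq]⟩)
  set s : ℝ := if 0 ≤ w x₀ then 1 else -1 with hsdef
  have hs : s = 1 ∨ s = -1 := by
    rw [hsdef]; split <;> simp
  have hsw : s * w x₀ = |w x₀| := by
    rw [hsdef]; split
    · rw [abs_of_nonneg ‹_›, one_mul]
    · rw [abs_of_neg (by linarith [not_le.1 ‹¬ 0 ≤ w x₀›])]; ring
  have hsabs : |s| = 1 := by rcases hs with h | h <;> rw [h] <;> norm_num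
  have hsmax : ∀ y ∈ Ω, s * w y ≤ s * w x₀ := by
    intro y hy
    calc s * w y ≤ |s * w y| := le_abs_self _
      _ = |w y| := by rw [abs_mul, hsabs, one_mul]
      _ ≤ |w x₀| := hmax' y (subset_closure hy)
      _ = s * w x₀ := hsw.symm
  obtain ⟨hz, hdd⟩ := interior_max_bounds hopen hw2 hx₀Ω hs hsmax
  -- simplify PDE at x₀
  have hpde0 := hpde x₀ hx₀Ω
  have hsum0 : ∑ k, (pder w k x₀) ^ 2 = 0 := by simp [hz]
  rw [hsum0] at hpde0
  have hone : ((1:ℝ) + 0) ^ (-(1/2) : ℝ) = 1 := by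
    rw [add_zero, Real.one_rpow]
  rw [hone] at hpde0
  simp only [hz, add_zero, inv_one, mul_zero, zero_mul, sub_zero, one_mul] at hpde0
  have hkey : ∑ i, (pder (pder w i) i x₀ - lam * q x₀ i i) = τ ^ 2 * ζ x₀ ^ 2 * w x₀ := by
    rw [← hpde0]
    apply Finset.sum_congr rfl
    intro i _
    simp [ite_mul, Finset.sum_ite_eq, Finset.mem_univ]
  -- Frobenius bound for diagonal entries
  set Q : ℝ := Real.sqrt (∑ i, ∑ j, (q x₀ i j) ^ 2) with hQdef
  have hQnonneg : 0 ≤ Q := Real.sqrt_nonneg _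
  have hQ : ∀ i, |q x₀ i i| ≤ Q := by
    intro i
    rw [← Real.sqrt_sq_eq_abs]
    apply Real.sqrt_le_sqrt
    have h1 : (q x₀ i i) ^ 2 ≤ ∑ j, (q x₀ i j) ^ 2 :=
      Finset.single_le_sum (f := fun j => (q x₀ i j) ^ 2)
        (fun j _ => sq_nonneg _) (Finset.mem_univ i)
    exact h1.trans (Finset.single_le_sum (f := fun i => ∑ j, (q x₀ i j) ^ 2)
      (fun i _ => Finset.sum_nonneg fun j _ => sq_nonneg _) (Finset.mem_univ i))
  have htr : |∑ i, q x₀ i i| ≤ (n : ℝ) * Q := by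
    calc |∑ i, q x₀ i i| ≤ ∑ i, |q x₀ i i| := Finset.abs_sum_le_sum_abs _ _
      _ ≤ ∑ _i : Fin n, Q := Finset.sum_le_sum fun i _ => hQ i
      _ = (n : ℝ) * Q := by
          rw [Finset.sum_const, Finset.card_univ, Fintype.card_fin, nsmul_eq_mul]
  have hmain : τ ^ 2 * ζ x₀ ^ 2 * |w x₀| ≤ (n : ℝ) * Q := by
    have h4 : τ ^ 2 * ζ x₀ ^ 2 * |w x₀|
        = ∑ i, (s * pder (pder w i) i x₀ - s * (lam * q x₀ i i)) := by
      rw [← hsw]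
      have : ∑ i, (s * pder (pder w i) i x₀ - s * (lam * q x₀ i i))
          = s * ∑ i, (pder (pder w i) i x₀ - lam * q x₀ i i) := by
        rw [Finset.mul_sum]; apply Finset.sum_congr rfl; intro i _; ring
      rw [this, hkey]; ring
    have h5 : ∑ i, (s * pder (pder w i) i x₀ - s * (lam * q x₀ i i))
        ≤ ∑ i, (0 - s * (lam * q x₀ i i)) :=
      Finset.sum_le_sum fun i _ => by linarith [hdd i]
    have h6 : ∑ i, ((0:ℝ) - s * (lam * q x₀ i i)) = -(s * lam) * ∑ i, q x₀ i i := by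
      rw [Finset.mul_sum]; apply Finset.sum_congr rfl; intro i _; ring
    have h7 : -(s * lam) * ∑ i, q x₀ i i ≤ (n : ℝ) * Q := by
      calc -(s * lam) * ∑ i, q x₀ i i ≤ |(-(s * lam)) * ∑ i, q x₀ i i| := le_abs_self _
        _ = |s| * |lam| * |∑ i, q x₀ i i| := by rw [abs_mul, abs_neg, abs_mul]
        _ ≤ 1 * 1 * |∑ i, q x₀ i i| := by
            apply mul_le_mul_of_nonneg_right _ (abs_nonneg _)
            rw [hsabs, one_mul]; simpa using hlam
        _ = |∑ i, q x₀ i i| := by ring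
        _ ≤ (n : ℝ) * Q := htr
    rw [h4]
    exact le_trans h5 (by rw [h6] at *; exact h7)
  -- case split on ζ x₀
  rcases lt_or_eq_of_le (hζ01 x₀ (subset_closure hx₀Ω)).2 with hlt | heq
  · exact le_max_of_le_left (hsmall x₀ hx₀Ω hlt)
  · apply le_max_of_le_right
    have hmain' : τ ^ 2 * |w x₀| ≤ (n : ℝ) * Q := by
      rw [heq] at hmain; simpa using hmain
    have hcontQ : ContinuousOn
        (fun x => (n : ℝ) * Real.sqrt (∑ i, ∑ j, (q x i j) ^ 2)) (closure Ω) := by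
      apply continuousOn_const.mul
      apply Real.continuous_sqrt.comp_continuousOn
      apply continuousOn_finset_sum
      intro i _
      apply continuousOn_finset_sum
      intro j _
      exact (hqc i j).pow 2
    have hbddQ : BddAbove
        ((fun x => (n : ℝ) * Real.sqrt (∑ i, ∑ j, (q x i j) ^ 2)) '' closure Ω) :=
      hK.bddAbove_image hcontQ
    have hsup : (n : ℝ) * Q ≤
        sSup ((fun x => (n : ℝ) * Real.sqrt (∑ i, ∑ j, (q x i j) ^ 2)) '' closure Ω) :=
      le_csSup hbddQ ⟨x₀, subset_closure hx₀Ω, rfl⟩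
    have hτ2 : (0:ℝ) < τ ^ 2 := by positivity
    calc |w x₀| = (τ ^ 2)⁻¹ * (τ ^ 2 * |w x₀|) := by field_simp
      _ ≤ (τ ^ 2)⁻¹ * sSup ((fun x => (n : ℝ) *
            Real.sqrt (∑ i, ∑ j, (q x i j) ^ 2)) '' closure Ω) :=
        mul_le_mul_of_nonneg_left (le_trans hmain' hsup) (inv_nonneg.2 hτ2.le)
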